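/- For real x > 0 and 0 ≤ σ ≤ 1, Gautschi's inequality holds: x^(-σ) ≤ Γ(x)/Γ(x+σ) ≤ (1 + 1/x) · (x+1)^(-σ). -/
import Mathlib


open Real

theorem gautschi_inequality (x σ : ℝ) (hx : 0 < x) (hσ0 : 0 ≤ σ) (hσ1 : σ ≤ 1) :
    x ^ (-σ) ≤ Real.Gamma x / Real.Gamma (x + σ) ∧
    Real.Gamma x / Real.Gamma (x + σ) ≤ (1 + 1 / x) * (x + 1) ^ (-σ) := by
  have hGx : 0 < Real.Gamma x := Real.Gamma_pos_of_pos hx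
  have hGxσ : 0 < Real.Gamma (x + σ) := Real.Gamma_pos_of_pos (by linarith)
  have hx1 : (0:ℝ) < x + 1 := by linarith
  -- handle σ = 0
  rcases eq_or_lt_of_le hσ0 with h0 | h0
  · subst h0
    simp only [add_zero, neg_zero, Real.rpow_zero, div_self hGx.ne']
    constructor
    · exact le_refl 1
    · have : (0:ℝ) < 1 / x := by positivity
      linarith
  rcases eq_or_lt_of_le hσ1 with h1 | h1
  · subst h1
    rw [Real.Gamma_add_one hx.ne']
    rw [div_mul_eq_div_div_swap, div_self hGx.ne']
    constructor
    · rw [Real.rpow_neg_one]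
      rw [one_div, inv_le_inv₀ (by positivity) hx]
    · rw [Real.rpow_neg_one, one_add_div hx.ne', div_mul_eq_mul_div,
        mul_inv_cancel₀ hx1.ne']
  -- main case 0 < σ < 1
  have ha : 0 < 1 - σ := by linarith
  have key1 : Real.Gamma (x + σ) ≤ Real.Gamma x * x ^ σ := by
    have h := Real.Gamma_mul_add_mul_le_rpow_Gamma_mul_rpow_Gamma
      (s := x) (t := x + 1) (a := 1 - σ) (b := σ) hx hx1 ha h0 (by ring)
    have e1 : (1 - σ) * x + σ * (x + 1) = x + σ := by ring
    rw [e1, Real.Gamma_add_one hx.ne'] at h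
    calc Real.Gamma (x + σ) ≤ Real.Gamma x ^ (1 - σ) * (x * Real.Gamma x) ^ σ := h
      _ = Real.Gamma x * x ^ σ := by
          rw [Real.mul_rpow hx.le hGx.le]
          rw [show Real.Gamma x ^ (1 - σ) * (x ^ σ * Real.Gamma x ^ σ)
              = (Real.Gamma x ^ (1 - σ) * Real.Gamma x ^ σ) * x ^ σ by ring]
          rw [← Real.rpow_add hGx]
          norm_num
  have key2 : Real.Gamma (x + 1) ≤ Real.Gamma (x + σ) * (x + 1) ^ (1 - σ) := by
    have hxσ : 0 < x + σ := by linarith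
    have h := Real.Gamma_mul_add_mul_le_rpow_Gamma_mul_rpow_Gamma
      (s := x + σ) (t := x + σ + 1) (a := σ) (b := 1 - σ) hxσ (by linarith) h0 ha (by ring)
    have e1 : σ * (x + σ) + (1 - σ) * (x + σ + 1) = x + 1 := by ring
    rw [e1, Real.Gamma_add_one hxσ.ne'] at h
    calc Real.Gamma (x + 1)
        ≤ Real.Gamma (x + σ) ^ σ * ((x + σ) * Real.Gamma (x + σ)) ^ (1 - σ) := h
      _ = Real.Gamma (x + σ) * (x + σ) ^ (1 - σ) := by
          rw [Real.mul_rpow hxσ.le hGxσ.le]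
          rw [show Real.Gamma (x+σ) ^ σ * ((x+σ) ^ (1-σ) * Real.Gamma (x+σ) ^ (1-σ))
              = (Real.Gamma (x+σ) ^ σ * Real.Gamma (x+σ) ^ (1-σ)) * (x+σ) ^ (1-σ) by ring]
          rw [← Real.rpow_add hGxσ]
          norm_num
      _ ≤ Real.Gamma (x + σ) * (x + 1) ^ (1 - σ) := by
          have : (x + σ) ^ (1 - σ) ≤ (x + 1) ^ (1 - σ) :=
            Real.rpow_le_rpow (by linarith) (by linarith) ha.le
          exact mul_le_mul_of_nonneg_left this hGxσ.le
  constructor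
  · rw [Real.rpow_neg hx.le, ← one_div, div_le_div_iff₀ (by positivity) hGxσ]
    calc (1:ℝ) * Real.Gamma (x + σ) = Real.Gamma (x + σ) := one_mul _
      _ ≤ Real.Gamma x * x ^ σ := key1
  · rw [Real.Gamma_add_one hx.ne'] at key2
    rw [div_le_iff₀ hGxσ]
    have h2 : Real.Gamma x ≤ Real.Gamma (x + σ) * (x + 1) ^ (1 - σ) / x := by
      rw [le_div_iff₀ hx]; linarith [key2]
    calc Real.Gamma x ≤ Real.Gamma (x + σ) * (x + 1) ^ (1 - σ) / x := h2
      _ = (1 + 1 / x) * (x + 1) ^ (-σ) * Real.Gamma (x + σ) := by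
          rw [show (1 : ℝ) - σ = 1 + (-σ) by ring, Real.rpow_add hx1, Real.rpow_one,
            one_add_div hx.ne']
          ring
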